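/- The inverse regularized incomplete beta function threshold A(μ) = I⁻¹_{1−s}(cμ + k₁, c(1−μ) + k₂) is monotone nondecreasing in μ: if μ₁ ≤ μ₂ (with both in (0,1)) then A(μ₁) ≤ A(μ₂). Equivalently, for fixed x ∈ (0,1), the regularized incomplete beta function I(x; cμ + k₁, c(1−μ) + k₂) is nonincreasing in μ. -/

import Mathlib

open MeasureTheory Set Filter

noncomputable def betaFun (a b : ℝ) : ℝ :=
  ∫ t in (0:ℝ)..1, t ^ (a - 1) * (1 - t) ^ (b - 1)

noncomputable def regIncBeta (x a b : ℝ) : ℝ :=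
  (∫ t in (0:ℝ)..x, t ^ (a - 1) * (1 - t) ^ (b - 1)) / betaFun a b

noncomputable def betaDens (μ c x : ℝ) : ℝ :=
  x ^ (c * μ - 1) * (1 - x) ^ (c * (1 - μ) - 1) / betaFun (c * μ) (c * (1 - μ))

/-- Integrability of the beta integrand on `[0,1]`. -/
lemma betaInt_integrable {a b : ℝ} (ha : 0 < a) (hb : 0 < b) :
    IntervalIntegrable (fun t : ℝ => t ^ (a - 1) * (1 - t) ^ (b - 1)) volume 0 1 := by
  have h1 : IntervalIntegrable (fun t : ℝ => t ^ (a - 1) * (1 - t) ^ (b - 1))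
      volume 0 (1/2) := by
    apply (intervalIntegral.intervalIntegrable_rpow' (by linarith : (-1:ℝ) < a - 1)).mul_continuousOn
    apply ContinuousOn.rpow_const (continuous_const.sub continuous_id).continuousOn
    intro t ht
    rw [Set.uIcc_of_le (by norm_num : (0:ℝ) ≤ 1/2)] at ht
    left
    have : t ≤ 1/2 := ht.2
    intro h
    simp only [Pi.sub_apply, id_eq] at h
    linarith
  have h2 : IntervalIntegrable (fun t : ℝ => t ^ (a - 1) * (1 - t) ^ (b - 1))
      volume (1/2) 1 := by
    have base : IntervalIntegrable (fun t : ℝ => t ^ (b - 1)) volume 0 (1/2) :=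
      intervalIntegral.intervalIntegrable_rpow' (by linarith : (-1:ℝ) < b - 1)
    have comp := (base.comp_sub_left 1).symm
    norm_num at comp
    apply comp.continuousOn_mul
    apply ContinuousOn.rpow_const continuous_id.continuousOn
    intro t ht
    rw [Set.uIcc_of_le (by norm_num : (1:ℝ)/2 ≤ 1)] at ht
    left
    have : (1:ℝ)/2 ≤ t := ht.1
    simp only [id_eq]
    intro h
    linarith
  exact h1.trans h2

lemma betaInt_integrable_sub {a b u v : ℝ} (ha : 0 < a) (hb : 0 < b)
    (hu : 0 ≤ u) (hv : v ≤ 1) (huv : u ≤ v) :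
    IntervalIntegrable (fun t : ℝ => t ^ (a - 1) * (1 - t) ^ (b - 1)) volume u v := by
  apply (betaInt_integrable ha hb).mono_set
  rw [Set.uIcc_of_le huv, Set.uIcc_of_le (by norm_num : (0:ℝ) ≤ 1)]
  exact Set.Icc_subset_Icc hu hv

/-- Positivity of the beta integral over a nondegenerate subinterval of `[0,1]`. -/
lemma betaInt_pos {a b u v : ℝ} (ha : 0 < a) (hb : 0 < b)
    (hu : 0 ≤ u) (hv : v ≤ 1) (huv : u < v) :
    0 < ∫ t in u..v, t ^ (a - 1) * (1 - t) ^ (b - 1) := by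
  apply intervalIntegral.intervalIntegral_pos_of_pos_on
    (betaInt_integrable_sub ha hb hu hv huv.le)
  · intro t ht
    have ht0 : 0 < t := lt_of_le_of_lt hu ht.1
    have ht1 : t < 1 := lt_of_lt_of_le ht.2 hv
    exact mul_pos (Real.rpow_pos_of_pos ht0 _) (Real.rpow_pos_of_pos (by linarith) _)
  · exact huv

lemma betaFun_pos {a b : ℝ} (ha : 0 < a) (hb : 0 < b) : 0 < betaFun a b :=
  betaInt_pos ha hb le_rfl le_rfl one_pos

/-- Core monotonicity: shifting mass `δ ≥ 0` from `b` to `a` decreases the regularized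
incomplete beta function. -/
lemma regIncBeta_shift_le {a b δ x : ℝ} (ha : 0 < a) (hδ : 0 ≤ δ) (hbδ : 0 < b - δ)
    (hx : x ∈ Set.Ioo (0:ℝ) 1) :
    regIncBeta x (a + δ) (b - δ) ≤ regIncBeta x a b := by
  obtain ⟨hx0, hx1⟩ := hx
  have hb : 0 < b := by linarith
  have haδ : 0 < a + δ := by linarith
  set g : ℝ → ℝ := fun t => t ^ (a - 1) * (1 - t) ^ (b - 1) with hg
  set h : ℝ → ℝ := fun t => t ^ (a + δ - 1) * (1 - t) ^ (b - δ - 1) with hh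
  set R : ℝ := x ^ δ * (1 - x) ^ (-δ) with hR
  have hRpos : 0 < R :=
    mul_pos (Real.rpow_pos_of_pos hx0 _) (Real.rpow_pos_of_pos (by linarith) _)
  -- the four pieces
  set r : ℝ := ∫ t in (0:ℝ)..x, g t with hr
  set s' : ℝ := ∫ t in x..(1:ℝ), g t with hs'
  set p : ℝ := ∫ t in (0:ℝ)..x, h t with hp
  set q : ℝ := ∫ t in x..(1:ℝ), h t with hq
  have hrpos : 0 < r := betaInt_pos ha hb le_rfl hx1.le hx0
  have hspos : 0 < s' := betaInt_pos ha hb hx0.le le_rfl hx1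
  have hppos : 0 < p := betaInt_pos haδ hbδ le_rfl hx1.le hx0
  have hqpos : 0 < q := betaInt_pos haδ hbδ hx0.le le_rfl hx1
  have hgint : IntegrableOn g (Set.Ioo 0 1) volume := by
    have := (betaInt_integrable ha hb).1
    exact this.mono_set Set.Ioo_subset_Ioc_self
  have hhint : IntegrableOn h (Set.Ioo 0 1) volume := by
    have := (betaInt_integrable haδ hbδ).1
    exact this.mono_set Set.Ioo_subset_Ioc_self
  -- pointwise facts
  have key1 : ∀ t ∈ Set.Ioo (0:ℝ) x, h t ≤ R * g t := by
    intro t ⟨ht0, htx⟩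
    have ht1 : t < 1 := lt_trans htx hx1
    have e1 : t ^ (a + δ - 1) = t ^ (a - 1) * t ^ δ := by
      rw [← Real.rpow_add ht0]; ring_nf
    have e2 : (1 - t) ^ (b - δ - 1) = (1 - t) ^ (b - 1) * (1 - t) ^ (-δ) := by
      rw [← Real.rpow_add (by linarith : (0:ℝ) < 1 - t)]; ring_nf
    have b1 : t ^ δ ≤ x ^ δ := Real.rpow_le_rpow ht0.le htx.le hδ
    have b2 : (1 - t) ^ (-δ) ≤ (1 - x) ^ (-δ) :=
      Real.rpow_le_rpow_of_nonpos (by linarith) (by linarith) (by linarith)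
    have hge : 0 ≤ g t :=
      mul_nonneg (Real.rpow_nonneg ht0.le _) (Real.rpow_nonneg (by linarith) _)
    have : h t = g t * (t ^ δ * (1 - t) ^ (-δ)) := by
      simp only [hh, hg, e1, e2]; ring
    rw [this]
    calc g t * (t ^ δ * (1 - t) ^ (-δ)) ≤ g t * R := by
          apply mul_le_mul_of_nonneg_left _ hge
          exact mul_le_mul b1 b2 (Real.rpow_nonneg (by linarith) _)
            (Real.rpow_nonneg hx0.le _)
      _ = R * g t := mul_comm _ _
  have key2 : ∀ t ∈ Set.Ioo x (1:ℝ), R * g t ≤ h t := by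
    intro t ⟨htx, ht1⟩
    have ht0 : 0 < t := lt_trans hx0 htx
    have e1 : t ^ (a + δ - 1) = t ^ (a - 1) * t ^ δ := by
      rw [← Real.rpow_add ht0]; ring_nf
    have e2 : (1 - t) ^ (b - δ - 1) = (1 - t) ^ (b - 1) * (1 - t) ^ (-δ) := by
      rw [← Real.rpow_add (by linarith : (0:ℝ) < 1 - t)]; ring_nf
    have b1 : x ^ δ ≤ t ^ δ := Real.rpow_le_rpow hx0.le htx.le hδ
    have b2 : (1 - x) ^ (-δ) ≤ (1 - t) ^ (-δ) :=
      Real.rpow_le_rpow_of_nonpos (by linarith) (by linarith) (by linarith)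
    have hge : 0 ≤ g t :=
      mul_nonneg (Real.rpow_nonneg ht0.le _) (Real.rpow_nonneg (by linarith) _)
    have : h t = g t * (t ^ δ * (1 - t) ^ (-δ)) := by
      simp only [hh, hg, e1, e2]; ring
    rw [this, mul_comm R (g t)]
    apply mul_le_mul_of_nonneg_left _ hge
    exact mul_le_mul b1 b2 (Real.rpow_nonneg (by linarith) _) (Real.rpow_nonneg ht0.le _)
  -- integral comparison on [0,x]
  have int1 : p ≤ R * r := by
    have hPint : IntegrableOn h (Set.Ioo 0 x) volume :=
      hhint.mono_set (Set.Ioo_subset_Ioo le_rfl hx1.le)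
    have hGint : IntegrableOn (fun t => R * g t) (Set.Ioo 0 x) volume :=
      (hgint.mono_set (Set.Ioo_subset_Ioo le_rfl hx1.le)).const_mul R
    have := setIntegral_mono_on hPint hGint measurableSet_Ioo key1
    rw [hp, hr, intervalIntegral.integral_of_le hx0.le, intervalIntegral.integral_of_le hx0.le,
      integral_Ioc_eq_integral_Ioo, integral_Ioc_eq_integral_Ioo]
    calc ∫ t in Set.Ioo 0 x, h t ≤ ∫ t in Set.Ioo 0 x, R * g t := this
      _ = R * ∫ t in Set.Ioo 0 x, g t := integral_const_mul R _
  -- integral comparison on [x,1]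
  have int2 : R * s' ≤ q := by
    have hPint : IntegrableOn h (Set.Ioo x 1) volume :=
      hhint.mono_set (Set.Ioo_subset_Ioo hx0.le le_rfl)
    have hGint : IntegrableOn (fun t => R * g t) (Set.Ioo x 1) volume :=
      (hgint.mono_set (Set.Ioo_subset_Ioo hx0.le le_rfl)).const_mul R
    have := setIntegral_mono_on hGint hPint measurableSet_Ioo key2
    rw [hq, hs', intervalIntegral.integral_of_le hx1.le, intervalIntegral.integral_of_le hx1.le,
      integral_Ioc_eq_integral_Ioo, integral_Ioc_eq_integral_Ioo]
    calc R * ∫ t in Set.Ioo x 1, g t = ∫ t in Set.Ioo x 1, R * g t := (integral_const_mul R _).symm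
      _ ≤ ∫ t in Set.Ioo x 1, h t := this
  -- betaFun splits
  have hsplit1 : betaFun a b = r + s' := by
    rw [betaFun, hr, hs']
    exact (intervalIntegral.integral_add_adjacent_intervals
      (betaInt_integrable_sub ha hb le_rfl hx1.le hx0.le)
      (betaInt_integrable_sub ha hb hx0.le le_rfl hx1.le)).symm
  have hsplit2 : betaFun (a + δ) (b - δ) = p + q := by
    rw [betaFun, hp, hq]
    exact (intervalIntegral.integral_add_adjacent_intervals
      (betaInt_integrable_sub haδ hbδ le_rfl hx1.le hx0.le)
      (betaInt_integrable_sub haδ hbδ hx0.le le_rfl hx1.le)).symm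
  have goal : p / (p + q) ≤ r / (r + s') := by
    rw [div_le_div_iff₀ (by linarith) (by linarith)]
    nlinarith [mul_le_mul_of_nonneg_right int1 hspos.le,
      mul_le_mul_of_nonneg_left int2 hrpos.le]
  simpa only [regIncBeta, hsplit1, hsplit2, hr, hp] using goal

theorem stmt14 (c s k₁ k₂ x : ℝ) (hc : 0 < c) (hs : s ∈ Set.Ioo (0:ℝ) 1)
    (hx : x ∈ Set.Ioo (0:ℝ) 1)
    (hk : ∀ μ ∈ Set.Ioo (0:ℝ) 1, -(c * μ) < k₁ ∧ -(c * (1 - μ)) < k₂) :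
    (∀ μ₁ ∈ Set.Ioo (0:ℝ) 1, ∀ μ₂ ∈ Set.Ioo (0:ℝ) 1, μ₁ ≤ μ₂ →
      regIncBeta x (c * μ₂ + k₁) (c * (1 - μ₂) + k₂) ≤
        regIncBeta x (c * μ₁ + k₁) (c * (1 - μ₁) + k₂))
    ∧ (∀ μ₁ ∈ Set.Ioo (0:ℝ) 1, ∀ μ₂ ∈ Set.Ioo (0:ℝ) 1, μ₁ ≤ μ₂ →
        ∀ A₁ ∈ Set.Ioo (0:ℝ) 1, ∀ A₂ ∈ Set.Ioo (0:ℝ) 1,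
          regIncBeta A₁ (c * μ₁ + k₁) (c * (1 - μ₁) + k₂) = 1 - s →
          regIncBeta A₂ (c * μ₂ + k₁) (c * (1 - μ₂) + k₂) = 1 - s →
          A₁ ≤ A₂) := by
  have main : ∀ y ∈ Set.Ioo (0:ℝ) 1, ∀ μ₁ ∈ Set.Ioo (0:ℝ) 1, ∀ μ₂ ∈ Set.Ioo (0:ℝ) 1, μ₁ ≤ μ₂ →
      regIncBeta y (c * μ₂ + k₁) (c * (1 - μ₂) + k₂) ≤
        regIncBeta y (c * μ₁ + k₁) (c * (1 - μ₁) + k₂) := by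
    intro y hy μ₁ hμ₁ μ₂ hμ₂ h12
    have hk1 := hk μ₁ hμ₁
    have hk2 := hk μ₂ hμ₂
    have ha : 0 < c * μ₁ + k₁ := by linarith [hk1.1]
    have hδ : 0 ≤ c * (μ₂ - μ₁) := by nlinarith
    have hbδ : 0 < (c * (1 - μ₁) + k₂) - c * (μ₂ - μ₁) := by nlinarith [hk2.2]
    have := regIncBeta_shift_le ha hδ hbδ hy
    have e1 : c * μ₁ + k₁ + c * (μ₂ - μ₁) = c * μ₂ + k₁ := by ring
    have e2 : c * (1 - μ₁) + k₂ - c * (μ₂ - μ₁) = c * (1 - μ₂) + k₂ := by ring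
    rwa [e1, e2] at this
  refine ⟨fun μ₁ hμ₁ μ₂ hμ₂ h12 => main x hx μ₁ hμ₁ μ₂ hμ₂ h12, ?_⟩
  intro μ₁ hμ₁ μ₂ hμ₂ h12 A₁ hA₁ A₂ hA₂ hI₁ hI₂
  by_contra hlt
  push_neg at hlt
  have hk1 := hk μ₁ hμ₁
  have ha : 0 < c * μ₁ + k₁ := by linarith [hk1.1]
  have hb : 0 < c * (1 - μ₁) + k₂ := by linarith [hk1.2]
  -- strict monotonicity in x for parameters at μ₁
  have hmono : regIncBeta A₂ (c * μ₁ + k₁) (c * (1 - μ₁) + k₂) <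
      regIncBeta A₁ (c * μ₁ + k₁) (c * (1 - μ₁) + k₂) := by
    have hB := betaFun_pos ha hb
    have hsum : (∫ t in (0:ℝ)..A₁, t ^ (c * μ₁ + k₁ - 1) * (1 - t) ^ (c * (1 - μ₁) + k₂ - 1))
        = (∫ t in (0:ℝ)..A₂, t ^ (c * μ₁ + k₁ - 1) * (1 - t) ^ (c * (1 - μ₁) + k₂ - 1))
          + ∫ t in A₂..A₁, t ^ (c * μ₁ + k₁ - 1) * (1 - t) ^ (c * (1 - μ₁) + k₂ - 1) :=
      (intervalIntegral.integral_add_adjacent_intervals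
        (betaInt_integrable_sub ha hb le_rfl hA₂.2.le hA₂.1.le)
        (betaInt_integrable_sub ha hb hA₂.1.le hA₁.2.le hlt.le)).symm
    have hpos := betaInt_pos ha hb hA₂.1.le hA₁.2.le hlt
    have hlt' : (∫ t in (0:ℝ)..A₂, t ^ (c * μ₁ + k₁ - 1) * (1 - t) ^ (c * (1 - μ₁) + k₂ - 1))
        < ∫ t in (0:ℝ)..A₁, t ^ (c * μ₁ + k₁ - 1) * (1 - t) ^ (c * (1 - μ₁) + k₂ - 1) := by
      rw [hsum]; linarith
    unfold regIncBeta
    exact div_lt_div_of_pos_right hlt' hB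
  have hge : (1 - s) ≤ regIncBeta A₂ (c * μ₁ + k₁) (c * (1 - μ₁) + k₂) := by
    rw [← hI₂]; exact main A₂ hA₂ μ₁ hμ₁ μ₂ hμ₂ h12
  rw [hI₁] at hmono
  linarith
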